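/- Suppose μ : ℝ → [0,∞) is C² with |μ′| ≤ 1 and |μ″| ≤ μ″_max everywhere. Then the Hessian of φ̃(X) = Σ_{i,j=1}^n μ([g(X)g(X)ᵀ − M]_{i,j}) satisfies ‖∇²φ̃(X)‖²_F ≤ 12[n²k + nk(μ″_max)²‖X‖⁴ + n(μ″_max)²‖X‖⁴], where ‖·‖_F is the Frobenius norm of the Hessian matrix and ‖X‖ the Euclidean norm. -/

import Mathlib

def idx (n k : ℕ) (i : Fin n) (j : Fin k) : Fin (n * k) :=
  ⟨(i : ℕ) * k + (j : ℕ), by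
    have h1 : (i : ℕ) * k + (j : ℕ) < (i : ℕ) * k + k := Nat.add_lt_add_left j.2 _
    have h2 : (i : ℕ) * k + k = ((i : ℕ) + 1) * k := by ring
    have h3 : ((i : ℕ) + 1) * k ≤ n * k := Nat.mul_le_mul_right _ i.2
    omega⟩

def wEntry (n k : ℕ) (M : Fin n → Fin n → ℝ) (X : EuclideanSpace ℝ (Fin (n * k)))
    (i j : Fin n) : ℝ :=
  (∑ l : Fin k, X (idx n k i l) * X (idx n k j l)) - M i j

def phiTilde (n k : ℕ) (M : Fin n → Fin n → ℝ) (μ : ℝ → ℝ)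
    (X : EuclideanSpace ℝ (Fin (n * k))) : ℝ :=
  ∑ i : Fin n, ∑ j : Fin n, μ (wEntry n k M X i j)

section Aux

variable (n k : ℕ)

lemma idx_eq (i : Fin n) (j : Fin k) : idx n k i j = finProdFinEquiv (i, j) := by
  apply Fin.ext
  simp [idx, finProdFinEquiv]
  ring

lemma idx_inj {n k : ℕ} {i a : Fin n} {j b : Fin k} :
    idx n k i j = idx n k a b ↔ i = a ∧ j = b := by
  rw [idx_eq, idx_eq]
  constructor
  · intro h
    have := finProdFinEquiv.injective h
    simpa [Prod.ext_iff] using this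
  · rintro ⟨rfl, rfl⟩; rfl

lemma sum_idx (f : Fin (n * k) → ℝ) :
    ∑ ν, f ν = ∑ i : Fin n, ∑ j : Fin k, f (idx n k i j) := by
  rw [← Equiv.sum_comp finProdFinEquiv f, Fintype.sum_prod_type]
  simp [idx_eq]

lemma single_idx (a i : Fin n) (b l : Fin k) :
    (EuclideanSpace.single (idx n k a b) (1:ℝ)) (idx n k i l)
      = if i = a ∧ l = b then 1 else 0 := by
  simp [EuclideanSpace.single_apply, idx_inj]

noncomputable def Lmap (X : EuclideanSpace ℝ (Fin (n * k))) (i j : Fin n) :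
    EuclideanSpace ℝ (Fin (n * k)) →L[ℝ] ℝ :=
  ∑ l : Fin k, (X (idx n k i l) • EuclideanSpace.proj (idx n k j l)
    + X (idx n k j l) • EuclideanSpace.proj (idx n k i l))

lemma Lmap_apply (X v : EuclideanSpace ℝ (Fin (n * k))) (i j : Fin n) :
    Lmap n k X i j v
      = ∑ l : Fin k, (X (idx n k i l) * v (idx n k j l)
        + X (idx n k j l) * v (idx n k i l)) := by
  simp [Lmap]

noncomputable def Bmap (v : EuclideanSpace ℝ (Fin (n * k))) (i j : Fin n) :
    EuclideanSpace ℝ (Fin (n * k)) →L[ℝ] ℝ :=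
  ∑ l : Fin k, (v (idx n k j l) • EuclideanSpace.proj (idx n k i l)
    + v (idx n k i l) • EuclideanSpace.proj (idx n k j l))

lemma Bmap_apply (v Y : EuclideanSpace ℝ (Fin (n * k))) (i j : Fin n) :
    Bmap n k v i j Y
      = ∑ l : Fin k, (v (idx n k j l) * Y (idx n k i l)
        + v (idx n k i l) * Y (idx n k j l)) := by
  simp [Bmap]

lemma Lmap_eq_Bmap (X v : EuclideanSpace ℝ (Fin (n * k))) (i j : Fin n) :
    Lmap n k X i j v = Bmap n k v i j X := by
  rw [Lmap_apply, Bmap_apply]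
  exact Finset.sum_congr rfl fun l _ => by ring

variable (M : Fin n → Fin n → ℝ)

lemma hasFDerivAt_wEntry (X : EuclideanSpace ℝ (Fin (n * k))) (i j : Fin n) :
    HasFDerivAt (fun Y => wEntry n k M Y i j) (Lmap n k X i j) X := by
  have h : ∀ l : Fin k,
      HasFDerivAt (fun Y : EuclideanSpace ℝ (Fin (n * k)) =>
        (Y (idx n k i l) : ℝ) * (Y (idx n k j l) : ℝ))
        (((X (idx n k i l) : ℝ) • EuclideanSpace.proj (idx n k j l)
          + (X (idx n k j l) : ℝ) • EuclideanSpace.proj (idx n k i l) :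
            EuclideanSpace ℝ (Fin (n * k)) →L[ℝ] ℝ)) X := by
    intro l
    have hp : ∀ ν : Fin (n * k),
        HasFDerivAt (fun Y : EuclideanSpace ℝ (Fin (n * k)) => Y ν)
          (EuclideanSpace.proj ν : EuclideanSpace ℝ (Fin (n * k)) →L[ℝ] ℝ) X := fun ν =>
      (EuclideanSpace.proj (𝕜 := ℝ) ν).hasFDerivAt
    exact (hp (idx n k i l)).mul (hp (idx n k j l))
  have := (HasFDerivAt.sum (fun l (_ : l ∈ Finset.univ) => h l)).sub_const (M i j)
  simpa [Lmap, wEntry] using this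

end Aux

section Deriv

variable (n k : ℕ) (M : Fin n → Fin n → ℝ) (μ : ℝ → ℝ)

noncomputable def D1 (X : EuclideanSpace ℝ (Fin (n * k))) :
    EuclideanSpace ℝ (Fin (n * k)) →L[ℝ] ℝ :=
  ∑ i : Fin n, ∑ j : Fin n, deriv μ (wEntry n k M X i j) • Lmap n k X i j

lemma hasFDerivAt_phiTilde (hμd : Differentiable ℝ μ)
    (X : EuclideanSpace ℝ (Fin (n * k))) :
    HasFDerivAt (phiTilde n k M μ) (D1 n k M μ X) X := by
  have h : ∀ i j : Fin n,
      HasFDerivAt (fun Y => μ (wEntry n k M Y i j))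
        (deriv μ (wEntry n k M X i j) • Lmap n k X i j) X := fun i j =>
    ((hμd (wEntry n k M X i j)).hasDerivAt).comp_hasFDerivAt X
      (hasFDerivAt_wEntry n k M X i j)
  have := HasFDerivAt.fun_sum (fun i (_ : i ∈ Finset.univ) =>
    HasFDerivAt.fun_sum (fun j (_ : j ∈ Finset.univ) => h i j))
  exact this

noncomputable def D2 (v X : EuclideanSpace ℝ (Fin (n * k))) :
    EuclideanSpace ℝ (Fin (n * k)) →L[ℝ] ℝ :=
  ∑ i : Fin n, ∑ j : Fin n,
    (deriv μ (wEntry n k M X i j) • Bmap n k v i j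
      + (Bmap n k v i j X) • (deriv (deriv μ) (wEntry n k M X i j) • Lmap n k X i j))

lemma hasFDerivAt_D1 (hμ : ContDiff ℝ 2 μ) (v X : EuclideanSpace ℝ (Fin (n * k))) :
    HasFDerivAt (fun Y => D1 n k M μ Y v) (D2 n k M μ v X) X := by
  have hμd' : Differentiable ℝ (deriv μ) := by
    have h2 : ContDiff ℝ ((1 : ℕ) + 1) μ := by exact_mod_cast hμ
    exact ((contDiff_succ_iff_deriv.mp h2).2.2).differentiable (by simp)
  have h : ∀ i j : Fin n,
      HasFDerivAt (fun Y => deriv μ (wEntry n k M Y i j) * Bmap n k v i j Y)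
        (deriv μ (wEntry n k M X i j) • Bmap n k v i j
          + (Bmap n k v i j X) •
            (deriv (deriv μ) (wEntry n k M X i j) • Lmap n k X i j)) X := by
    intro i j
    have hc : HasFDerivAt (fun Y => deriv μ (wEntry n k M Y i j))
        (deriv (deriv μ) (wEntry n k M X i j) • Lmap n k X i j) X := by
      have := ((hμd' (wEntry n k M X i j)).hasDerivAt).comp_hasFDerivAt X
        (hasFDerivAt_wEntry n k M X i j)
      exact this
    have hd : HasFDerivAt (fun Y => Bmap n k v i j Y) (Bmap n k v i j) X :=
      (Bmap n k v i j).hasFDerivAt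
    have := hc.mul hd
    -- this : HasFDerivAt _ (deriv μ (w X i j) • Bmap + Bmap v i j X • c') X
    exact this
  have hsum := HasFDerivAt.fun_sum (fun i (_ : i ∈ Finset.univ) =>
    HasFDerivAt.fun_sum (fun j (_ : j ∈ Finset.univ) => h i j))
  have heq : (fun Y => D1 n k M μ Y v)
      = fun Y => ∑ i : Fin n, ∑ j : Fin n,
          deriv μ (wEntry n k M Y i j) * Bmap n k v i j Y := by
    funext Y
    simp [D1, ContinuousLinearMap.sum_apply, Lmap_eq_Bmap]
  rw [heq]
  simpa [D2] using hsum

lemma hessian_eq (hμ : ContDiff ℝ 2 μ) (X : EuclideanSpace ℝ (Fin (n * k)))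
    (ν η : Fin (n * k)) :
    fderiv ℝ (fun Y => fderiv ℝ (phiTilde n k M μ) Y (EuclideanSpace.single ν 1)) X
        (EuclideanSpace.single η 1)
      = D2 n k M μ (EuclideanSpace.single ν 1) X (EuclideanSpace.single η 1) := by
  have hμd : Differentiable ℝ μ := hμ.differentiable (by norm_num)
  have heq : (fun Y => fderiv ℝ (phiTilde n k M μ) Y (EuclideanSpace.single ν 1))
      = fun Y => D1 n k M μ Y (EuclideanSpace.single ν 1) := by
    funext Y
    rw [(hasFDerivAt_phiTilde n k M μ hμd Y).fderiv]
  rw [heq, (hasFDerivAt_D1 n k M μ hμ (EuclideanSpace.single ν 1) X).fderiv]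

end Deriv

section Algebra

-- small summation helpers
lemma sum_ite_conj {m : ℕ} (a : Fin m) (D : Prop) [Decidable D] (f : Fin m → ℝ) :
    (∑ j : Fin m, if j = a ∧ D then f j else 0) = if D then f a else 0 := by
  by_cases hD : D <;> simp [hD]

lemma sum_ite_const {α : Type*} [Fintype α] (C : Prop) [Decidable C] (f : α → ℝ) :
    (∑ x : α, if C then f x else 0) = if C then ∑ x : α, f x else 0 := by
  split_ifs <;> simp

lemma sum_ite_left {m : ℕ} (a : Fin m) (f g : Fin m → ℝ) :
    (∑ j : Fin m, (if j = a then f j else 0) * g j) = f a * g a := by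
  rw [Finset.sum_eq_single a]
  · simp
  · intro j _ hj; simp [hj]
  · simp

lemma sum_delta_mul {m : ℕ} (b q : Fin m) (r s : ℝ) (P Q : Prop) [Decidable P]
    [Decidable Q] :
    (∑ l : Fin m, (if P ∧ l = b then r else 0) * (if Q ∧ l = q then s else 0))
      = if P ∧ Q ∧ b = q then r * s else 0 := by
  by_cases hb : b = q
  · subst hb
    rw [Finset.sum_eq_single b]
    · by_cases hP : P <;> by_cases hQ : Q <;> simp [hP, hQ]
    · intro l _ hl; simp [hl]
    · simp
  · rw [Finset.sum_eq_zero]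
    · simp [hb]
    · intro l _
      by_cases hl : l = b
      · subst hl
        have : ¬(Q ∧ l = q) := by simp [hb]
        simp [this]
      · simp [hl]

lemma sum_delta_mul_fun {m : ℕ} (b : Fin m) (P : Prop) [Decidable P] (f : Fin m → ℝ) :
    (∑ l : Fin m, (if P ∧ l = b then (1:ℝ) else 0) * f l) = if P then f b else 0 := by
  by_cases hP : P
  · simp [hP, ite_mul, one_mul, zero_mul]
  · simp [hP]

lemma sum_ite_ite {m : ℕ} (a p : Fin m) (f g h : Fin m → ℝ) :
    (∑ j : Fin m, (if j = a then f j else 0) * (g j * (if j = p then h j else 0)))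
      = if a = p then f a * (g a * h a) else 0 := by
  by_cases hap : a = p
  · subst hap
    rw [Finset.sum_eq_single a]
    · simp
    · intro j _ hj; simp [hj]
    · simp
  · rw [Finset.sum_eq_zero]
    · simp [hap]
    · intro j _
      by_cases hj : j = a
      · subst hj; simp [hap]
      · simp [hj]

lemma sum_ite_const_mul {m : ℕ} (C : Prop) [Decidable C] (f g : Fin m → ℝ) :
    (∑ j : Fin m, (if C then f j else 0) * g j) = if C then ∑ j : Fin m, f j * g j else 0 := by
  split_ifs <;> simp

lemma sum_mul_ite_right {m : ℕ} (p : Fin m) (f g h : Fin m → ℝ) :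
    (∑ j : Fin m, f j * (g j * (if j = p then h j else 0))) = f p * (g p * h p) := by
  rw [Finset.sum_eq_single p]
  · simp
  · intro j _ hj; simp [hj]
  · simp

lemma double_sum_delta {m : ℕ} (a p : Fin m) (D : Prop) [Decidable D]
    (f : Fin m → Fin m → ℝ) :
    (∑ i : Fin m, ∑ j : Fin m, if j = a ∧ i = p ∧ D then f i j else 0)
      = if D then f p a else 0 := by
  rw [Finset.sum_congr rfl fun i (_ : i ∈ Finset.univ) => sum_ite_conj a (i = p ∧ D) (f i)]
  exact sum_ite_conj p D _

lemma sum_fun_mul_delta {m : ℕ} (b : Fin m) (P : Prop) [Decidable P] (f : Fin m → ℝ) :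
    (∑ l : Fin m, f l * (if P ∧ l = b then (1:ℝ) else 0)) = if P then f b else 0 := by
  rw [← sum_delta_mul_fun b P f]
  exact Finset.sum_congr rfl fun l _ => by ring

end Algebra

section Eval

variable {n k : ℕ} (M : Fin n → Fin n → ℝ) (μ : ℝ → ℝ)
  (X : EuclideanSpace ℝ (Fin (n * k)))

lemma Bmap_single_single (a p i j : Fin n) (b q : Fin k) :
    Bmap n k (EuclideanSpace.single (idx n k a b) 1) i j
        (EuclideanSpace.single (idx n k p q) 1)
      = (if j = a ∧ i = p ∧ b = q then (1:ℝ) else 0)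
        + (if i = a ∧ j = p ∧ b = q then (1:ℝ) else 0) := by
  rw [Bmap_apply, Finset.sum_add_distrib]
  congr 1
  · simp only [single_idx]
    simpa using sum_delta_mul b q (1:ℝ) 1 (j = a) (i = p)
  · simp only [single_idx]
    simpa using sum_delta_mul b q (1:ℝ) 1 (i = a) (j = p)

lemma Bmap_single_X (a i j : Fin n) (b : Fin k) :
    Bmap n k (EuclideanSpace.single (idx n k a b) 1) i j X
      = (if j = a then X (idx n k i b) else 0)
        + (if i = a then X (idx n k j b) else 0) := by
  rw [Bmap_apply, Finset.sum_add_distrib]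
  congr 1
  · simp only [single_idx]
    exact sum_delta_mul_fun b (j = a) _
  · simp only [single_idx]
    exact sum_delta_mul_fun b (i = a) _

lemma Lmap_X_single (p i j : Fin n) (q : Fin k) :
    Lmap n k X i j (EuclideanSpace.single (idx n k p q) 1)
      = (if j = p then X (idx n k i q) else 0)
        + (if i = p then X (idx n k j q) else 0) := by
  rw [Lmap_apply, Finset.sum_add_distrib]
  congr 1
  · simp only [single_idx]
    exact sum_fun_mul_delta q (j = p) _
  · simp only [single_idx]
    exact sum_fun_mul_delta q (i = p) _

lemma wEntry_symm (hM : ∀ i j, M i j = M j i) (i j : Fin n) :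
    wEntry n k M X i j = wEntry n k M X j i := by
  unfold wEntry
  rw [hM]
  congr 1
  exact Finset.sum_congr rfl fun l _ => mul_comm _ _

lemma D2_single (hM : ∀ i j, M i j = M j i) (a p : Fin n) (b q : Fin k) :
    D2 n k M μ (EuclideanSpace.single (idx n k a b) 1) X
        (EuclideanSpace.single (idx n k p q) 1)
      = (if b = q then 2 * deriv μ (wEntry n k M X a p) else 0)
        + (if a = p then 2 * (∑ j : Fin n, deriv (deriv μ) (wEntry n k M X a j)
            * (X (idx n k j b) * X (idx n k j q))) else 0)
        + 2 * (deriv (deriv μ) (wEntry n k M X a p)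
            * (X (idx n k p b) * X (idx n k a q))) := by
  set w : Fin n → Fin n → ℝ := fun i j => wEntry n k M X i j with hw
  have wsymm : ∀ i j, w i j = w j i := fun i j => wEntry_symm M X hM i j
  have happ : D2 n k M μ (EuclideanSpace.single (idx n k a b) 1) X
        (EuclideanSpace.single (idx n k p q) 1)
      = ∑ i : Fin n, ∑ j : Fin n,
          (deriv μ (w i j) * (Bmap n k (EuclideanSpace.single (idx n k a b) 1) i j
              (EuclideanSpace.single (idx n k p q) 1))
            + (Bmap n k (EuclideanSpace.single (idx n k a b) 1) i j X)
              * (deriv (deriv μ) (w i j)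
                * (Lmap n k X i j (EuclideanSpace.single (idx n k p q) 1)))) := by
    simp [hw, D2, ContinuousLinearMap.sum_apply, ContinuousLinearMap.add_apply,
      ContinuousLinearMap.smul_apply, smul_eq_mul, mul_assoc]
  rw [happ]
  have hterm : ∀ i j : Fin n,
      (deriv μ (w i j) * (Bmap n k (EuclideanSpace.single (idx n k a b) 1) i j
          (EuclideanSpace.single (idx n k p q) 1))
        + (Bmap n k (EuclideanSpace.single (idx n k a b) 1) i j X)
          * (deriv (deriv μ) (w i j)
            * (Lmap n k X i j (EuclideanSpace.single (idx n k p q) 1))))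
      = deriv μ (w i j) * (if j = a ∧ i = p ∧ b = q then 1 else 0)
        + deriv μ (w i j) * (if i = a ∧ j = p ∧ b = q then 1 else 0)
        + (if j = a then X (idx n k i b) else 0)
            * (deriv (deriv μ) (w i j) * (if j = p then X (idx n k i q) else 0))
        + (if j = a then X (idx n k i b) else 0)
            * (deriv (deriv μ) (w i j) * (if i = p then X (idx n k j q) else 0))
        + (if i = a then X (idx n k j b) else 0)
            * (deriv (deriv μ) (w i j) * (if j = p then X (idx n k i q) else 0))
        + (if i = a then X (idx n k j b) else 0)
            * (deriv (deriv μ) (w i j) * (if i = p then X (idx n k j q) else 0)) := by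
    intro i j
    rw [Bmap_single_single, Bmap_single_X, Lmap_X_single]
    ring
  rw [Finset.sum_congr rfl fun i (_ : i ∈ Finset.univ) =>
    Finset.sum_congr rfl fun j (_ : j ∈ Finset.univ) => hterm i j]
  simp only [Finset.sum_add_distrib]
  have S1 : (∑ i : Fin n, ∑ j : Fin n,
        deriv μ (w i j) * (if j = a ∧ i = p ∧ b = q then 1 else 0))
      = if b = q then deriv μ (w a p) else 0 := by
    simp only [mul_ite, mul_one, mul_zero]
    rw [double_sum_delta a p (b = q) (fun i j => deriv μ (w i j))]
    rw [wsymm p a]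
  have S2 : (∑ i : Fin n, ∑ j : Fin n,
        deriv μ (w i j) * (if i = a ∧ j = p ∧ b = q then 1 else 0))
      = if b = q then deriv μ (w a p) else 0 := by
    simp only [mul_ite, mul_one, mul_zero]
    have hcond : ∀ i j : Fin n, ((i = a ∧ j = p ∧ b = q) ↔ (j = p ∧ i = a ∧ b = q)) :=
      fun i j => by tauto
    simp only [hcond]
    exact double_sum_delta p a (b = q) (fun i j => deriv μ (w i j))
  have S3 : (∑ i : Fin n, ∑ j : Fin n, (if j = a then X (idx n k i b) else 0)
        * (deriv (deriv μ) (w i j) * (if j = p then X (idx n k i q) else 0)))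
      = if a = p then (∑ j : Fin n, deriv (deriv μ) (w a j)
          * (X (idx n k j b) * X (idx n k j q))) else 0 := by
    rw [Finset.sum_congr rfl fun i (_ : i ∈ Finset.univ) =>
      sum_ite_ite a p (fun _ => X (idx n k i b)) (fun j => deriv (deriv μ) (w i j))
        (fun _ => X (idx n k i q))]
    rw [sum_ite_const]
    congr 1
    refine Finset.sum_congr rfl fun i _ => ?_
    rw [wsymm i a]
    ring
  have S4 : (∑ i : Fin n, ∑ j : Fin n, (if j = a then X (idx n k i b) else 0)
        * (deriv (deriv μ) (w i j) * (if i = p then X (idx n k j q) else 0)))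
      = deriv (deriv μ) (w a p) * (X (idx n k p b) * X (idx n k a q)) := by
    rw [Finset.sum_congr rfl fun i (_ : i ∈ Finset.univ) =>
      sum_ite_left a (fun _ => X (idx n k i b))
        (fun j => deriv (deriv μ) (w i j) * (if i = p then X (idx n k j q) else 0))]
    simp only [mul_ite, mul_zero]
    rw [Finset.sum_ite_eq' Finset.univ p
      (fun i => X (idx n k i b) * (deriv (deriv μ) (w i a) * X (idx n k a q)))]
    simp only [Finset.mem_univ, if_true]
    rw [wsymm p a]
    ring
  have S5 : (∑ i : Fin n, ∑ j : Fin n, (if i = a then X (idx n k j b) else 0)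
        * (deriv (deriv μ) (w i j) * (if j = p then X (idx n k i q) else 0)))
      = deriv (deriv μ) (w a p) * (X (idx n k p b) * X (idx n k a q)) := by
    rw [Finset.sum_congr rfl fun i (_ : i ∈ Finset.univ) =>
      sum_ite_const_mul (i = a) (fun j => X (idx n k j b))
        (fun j => deriv (deriv μ) (w i j) * (if j = p then X (idx n k i q) else 0))]
    have hin : ∀ i : Fin n, (∑ j : Fin n, X (idx n k j b) * (deriv (deriv μ) (w i j)
        * (if j = p then X (idx n k i q) else 0)))
          = X (idx n k p b) * (deriv (deriv μ) (w i p) * X (idx n k i q)) :=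
      fun i => sum_mul_ite_right p (fun j => X (idx n k j b))
        (fun j => deriv (deriv μ) (w i j)) (fun _ => X (idx n k i q))
    simp only [hin]
    rw [Finset.sum_ite_eq' Finset.univ a
      (fun i => X (idx n k p b) * (deriv (deriv μ) (w i p) * X (idx n k i q)))]
    simp only [Finset.mem_univ, if_true]
    ring
  have S6 : (∑ i : Fin n, ∑ j : Fin n, (if i = a then X (idx n k j b) else 0)
        * (deriv (deriv μ) (w i j) * (if i = p then X (idx n k j q) else 0)))
      = if a = p then (∑ j : Fin n, deriv (deriv μ) (w a j)
          * (X (idx n k j b) * X (idx n k j q))) else 0 := by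
    rw [Finset.sum_congr rfl fun i (_ : i ∈ Finset.univ) =>
      sum_ite_const_mul (i = a) (fun j => X (idx n k j b))
        (fun j => deriv (deriv μ) (w i j) * (if i = p then X (idx n k j q) else 0))]
    rw [Finset.sum_ite_eq' Finset.univ a
      (fun i => ∑ j : Fin n, X (idx n k j b)
        * (deriv (deriv μ) (w i j) * (if i = p then X (idx n k j q) else 0)))]
    simp only [Finset.mem_univ, if_true]
    simp only [mul_ite, mul_zero]
    rw [sum_ite_const]
    congr 1
    exact Finset.sum_congr rfl fun j _ => by ring
  rw [S1, S2, S3, S4, S5, S6]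
  split_ifs <;> ring

end Eval

lemma norm_sq_eq (n k : ℕ) (X : EuclideanSpace ℝ (Fin (n * k))) :
    ‖X‖ ^ 2 = ∑ i : Fin n, ∑ l : Fin k, X (idx n k i l) ^ 2 := by
  have h : ‖X‖ ^ 2 = ∑ ν, X ν ^ 2 := by
    rw [EuclideanSpace.norm_eq, Real.sq_sqrt (by positivity)]
    exact Finset.sum_congr rfl fun ν _ => by rw [Real.norm_eq_abs, sq_abs]
  rw [h, sum_idx]

set_option maxHeartbeats 1000000 in
theorem phiTilde_hessian_bound (n k : ℕ) (M : Fin n → Fin n → ℝ)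
    (hM : ∀ i j, M i j = M j i)
    (μ : ℝ → ℝ) (hμpos : ∀ t, 0 ≤ μ t) (hμ : ContDiff ℝ 2 μ)
    (hμ' : ∀ t, |deriv μ t| ≤ 1)
    (c : ℝ) (hμ'' : ∀ t, |deriv (deriv μ) t| ≤ c)
    (X : EuclideanSpace ℝ (Fin (n * k))) :
    ∑ ν : Fin (n * k), ∑ η : Fin (n * k),
      (fderiv ℝ (fun Y => fderiv ℝ (phiTilde n k M μ) Y
          (EuclideanSpace.single ν 1)) X (EuclideanSpace.single η 1)) ^ 2 ≤
      12 * ((n : ℝ) ^ 2 * k + n * k * c ^ 2 * ‖X‖ ^ 4 + n * c ^ 2 * ‖X‖ ^ 4) := by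
  have hc : 0 ≤ c := le_trans (abs_nonneg _) (hμ'' 0)
  by_cases h0 : n * k = 0
  · have hE : IsEmpty (Fin (n * k)) := by rw [h0]; exact inferInstance
    rw [Finset.univ_eq_empty, Finset.sum_empty]
    positivity
  · have hnk1 : (1 : ℝ) ≤ (n : ℝ) * k := by
      have : 1 ≤ n * k := Nat.one_le_iff_ne_zero.mpr h0
      exact_mod_cast Nat.one_le_cast.mpr this
    set w : Fin n → Fin n → ℝ := fun i j => wEntry n k M X i j with hw
    set Z : Fin n → Fin k → ℝ := fun i l => X (idx n k i l) with hZ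
    set A : Fin n → Fin k → Fin k → ℝ :=
      fun a b q => ∑ j : Fin n, deriv (deriv μ) (w a j) * (Z j b * Z j q) with hA
    -- rewrite LHS as quadruple sum of explicit entries
    have hLHS : ∑ ν : Fin (n * k), ∑ η : Fin (n * k),
        (fderiv ℝ (fun Y => fderiv ℝ (phiTilde n k M μ) Y
            (EuclideanSpace.single ν 1)) X (EuclideanSpace.single η 1)) ^ 2
        = ∑ a : Fin n, ∑ b : Fin k, ∑ p : Fin n, ∑ q : Fin k,
            ((if b = q then 2 * deriv μ (w a p) else 0)
              + (if a = p then 2 * A a b q else 0)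
              + 2 * (deriv (deriv μ) (w a p) * (Z p b * Z a q))) ^ 2 := by
      rw [sum_idx n k]
      refine Finset.sum_congr rfl fun a _ => Finset.sum_congr rfl fun b _ => ?_
      rw [sum_idx n k]
      refine Finset.sum_congr rfl fun p _ => Finset.sum_congr rfl fun q _ => ?_
      rw [hessian_eq n k M μ hμ X, D2_single M μ X hM a p b q]
    rw [hLHS]
    -- pointwise bound
    have key : ∀ (a p : Fin n) (b q : Fin k),
        ((if b = q then 2 * deriv μ (w a p) else 0)
          + (if a = p then 2 * A a b q else 0)
          + 2 * (deriv (deriv μ) (w a p) * (Z p b * Z a q))) ^ 2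
        ≤ 12 * ((if b = q then 1 else 0) + (if a = p then (A a b q) ^ 2 else 0)
            + c ^ 2 * (Z p b ^ 2 * Z a q ^ 2)) := by
      intro a p b q
      have h1 : (deriv μ (w a p)) ^ 2 ≤ 1 := by
        have := hμ' (w a p)
        nlinarith [abs_nonneg (deriv μ (w a p)), sq_abs (deriv μ (w a p))]
      have h2 : (deriv (deriv μ) (w a p)) ^ 2 ≤ c ^ 2 := by
        have := hμ'' (w a p)
        nlinarith [abs_nonneg (deriv (deriv μ) (w a p)), sq_abs (deriv (deriv μ) (w a p))]
      have h3 : (deriv (deriv μ) (w a p) * (Z p b * Z a q)) ^ 2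
          ≤ c ^ 2 * (Z p b ^ 2 * Z a q ^ 2) := by
        have := mul_le_mul_of_nonneg_right h2 (sq_nonneg (Z p b * Z a q))
        nlinarith [sq_nonneg (Z p b * Z a q)]
      split_ifs with hbq hap hap
      · nlinarith [sq_nonneg (2 * deriv μ (w a p) - 2 * A a b q),
          sq_nonneg (2 * deriv μ (w a p) - 2 * (deriv (deriv μ) (w a p) * (Z p b * Z a q))),
          sq_nonneg (2 * A a b q - 2 * (deriv (deriv μ) (w a p) * (Z p b * Z a q)))]
      · nlinarith [sq_nonneg (2 * deriv μ (w a p)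
            - 2 * (deriv (deriv μ) (w a p) * (Z p b * Z a q)))]
      · nlinarith [sq_nonneg (2 * A a b q
            - 2 * (deriv (deriv μ) (w a p) * (Z p b * Z a q)))]
      · nlinarith []
    -- sum the pointwise bound
    have step1 : (∑ a : Fin n, ∑ b : Fin k, ∑ p : Fin n, ∑ q : Fin k,
          ((if b = q then 2 * deriv μ (w a p) else 0)
            + (if a = p then 2 * A a b q else 0)
            + 2 * (deriv (deriv μ) (w a p) * (Z p b * Z a q))) ^ 2)
        ≤ ∑ a : Fin n, ∑ b : Fin k, ∑ p : Fin n, ∑ q : Fin k,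
            12 * ((if b = q then 1 else 0) + (if a = p then (A a b q) ^ 2 else 0)
              + c ^ 2 * (Z p b ^ 2 * Z a q ^ 2)) :=
      Finset.sum_le_sum fun a _ => Finset.sum_le_sum fun b _ =>
        Finset.sum_le_sum fun p _ => Finset.sum_le_sum fun q _ => key a p b q
    refine le_trans step1 ?_
    have hsplit : (∑ a : Fin n, ∑ b : Fin k, ∑ p : Fin n, ∑ q : Fin k,
          12 * ((if b = q then (1:ℝ) else 0) + (if a = p then (A a b q) ^ 2 else 0)
            + c ^ 2 * (Z p b ^ 2 * Z a q ^ 2)))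
        = 12 * (∑ a : Fin n, ∑ b : Fin k, ∑ p : Fin n, ∑ q : Fin k,
              (if b = q then (1:ℝ) else 0))
          + 12 * (∑ a : Fin n, ∑ b : Fin k, ∑ p : Fin n, ∑ q : Fin k,
              (if a = p then (A a b q) ^ 2 else 0))
          + 12 * (∑ a : Fin n, ∑ b : Fin k, ∑ p : Fin n, ∑ q : Fin k,
              c ^ 2 * (Z p b ^ 2 * Z a q ^ 2)) := by
      simp only [mul_add, Finset.sum_add_distrib, Finset.mul_sum]
    rw [hsplit]
    have hS : (∑ i : Fin n, ∑ l : Fin k, Z i l ^ 2) = ‖X‖ ^ 2 := (norm_sq_eq n k X).symm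
    have hSnn : (0:ℝ) ≤ ∑ i : Fin n, ∑ l : Fin k, Z i l ^ 2 := by positivity
    have hprod : ∀ {α β : Type} [Fintype α] [Fintype β] (F : α → ℝ) (G : β → ℝ),
        (∑ a : α, ∑ b : β, F a * G b) = (∑ a : α, F a) * (∑ b : β, G b) := by
      intro α β _ _ F G
      rw [Finset.sum_mul_sum]
    -- first term
    have hE1 : (∑ a : Fin n, ∑ b : Fin k, ∑ p : Fin n, ∑ q : Fin k,
          (if b = q then (1:ℝ) else 0)) = (n:ℝ) ^ 2 * k := by
      simp [Finset.sum_ite_eq, Finset.card_univ]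
      push_cast
      ring
    -- second term
    have hμ''sq : ∀ t, (deriv (deriv μ) t) ^ 2 ≤ c ^ 2 := by
      intro t
      have := hμ'' t
      nlinarith [abs_nonneg (deriv (deriv μ) t), sq_abs (deriv (deriv μ) t)]
    have hA_bound : ∀ (a : Fin n) (b q : Fin k),
        (A a b q) ^ 2 ≤ c ^ 2 * ((∑ j : Fin n, Z j b ^ 2) * (∑ j : Fin n, Z j q ^ 2)) := by
      intro a b q
      have hA_eq : A a b q = ∑ j : Fin n, (deriv (deriv μ) (w a j) * Z j b) * Z j q :=
        Finset.sum_congr rfl fun j _ => by ring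
      have hcs := Finset.sum_mul_sq_le_sq_mul_sq Finset.univ
        (fun j : Fin n => deriv (deriv μ) (w a j) * Z j b) (fun j : Fin n => Z j q)
      have hfac : (∑ j : Fin n, (deriv (deriv μ) (w a j) * Z j b) ^ 2)
          ≤ c ^ 2 * ∑ j : Fin n, Z j b ^ 2 := by
        rw [Finset.mul_sum]
        refine Finset.sum_le_sum fun j _ => ?_
        have h := mul_le_mul_of_nonneg_right (hμ''sq (w a j)) (sq_nonneg (Z j b))
        calc (deriv (deriv μ) (w a j) * Z j b) ^ 2
            = (deriv (deriv μ) (w a j)) ^ 2 * Z j b ^ 2 := by ring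
          _ ≤ c ^ 2 * Z j b ^ 2 := h
      have hq : (0:ℝ) ≤ ∑ j : Fin n, Z j q ^ 2 := by positivity
      calc (A a b q) ^ 2
          = (∑ j : Fin n, (deriv (deriv μ) (w a j) * Z j b) * Z j q) ^ 2 := by rw [hA_eq]
        _ ≤ (∑ j : Fin n, (deriv (deriv μ) (w a j) * Z j b) ^ 2)
            * (∑ j : Fin n, Z j q ^ 2) := hcs
        _ ≤ (c ^ 2 * ∑ j : Fin n, Z j b ^ 2) * (∑ j : Fin n, Z j q ^ 2) :=
            mul_le_mul_of_nonneg_right hfac hq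
        _ = c ^ 2 * ((∑ j : Fin n, Z j b ^ 2) * (∑ j : Fin n, Z j q ^ 2)) := by ring
    have hE2 : (∑ a : Fin n, ∑ b : Fin k, ∑ p : Fin n, ∑ q : Fin k,
          (if a = p then (A a b q) ^ 2 else 0)) ≤ (n:ℝ) * c ^ 2 * ‖X‖ ^ 4 := by
      have hcollapse : ∀ (a : Fin n) (b : Fin k),
          (∑ p : Fin n, ∑ q : Fin k, (if a = p then (A a b q) ^ 2 else 0))
            = ∑ q : Fin k, (A a b q) ^ 2 := by
        intro a b
        rw [Finset.sum_congr rfl fun p (_ : p ∈ Finset.univ) =>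
          sum_ite_const (a = p) (fun q : Fin k => (A a b q) ^ 2)]
        rw [Finset.sum_ite_eq Finset.univ a (fun p => ∑ q : Fin k, (A a b q) ^ 2)]
        simp
      rw [Finset.sum_congr rfl fun a (_ : a ∈ Finset.univ) =>
        Finset.sum_congr rfl fun b (_ : b ∈ Finset.univ) => hcollapse a b]
      have hstep : (∑ a : Fin n, ∑ b : Fin k, ∑ q : Fin k, (A a b q) ^ 2)
          ≤ ∑ a : Fin n, ∑ b : Fin k, ∑ q : Fin k,
              c ^ 2 * ((∑ j : Fin n, Z j b ^ 2) * (∑ j : Fin n, Z j q ^ 2)) :=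
        Finset.sum_le_sum fun a _ => Finset.sum_le_sum fun b _ =>
          Finset.sum_le_sum fun q _ => hA_bound a b q
      refine le_trans hstep ?_
      have hfactor : ∀ a : Fin n, (∑ b : Fin k, ∑ q : Fin k,
            c ^ 2 * ((∑ j : Fin n, Z j b ^ 2) * (∑ j : Fin n, Z j q ^ 2)))
          = c ^ 2 * ((∑ b : Fin k, ∑ j : Fin n, Z j b ^ 2)
              * (∑ q : Fin k, ∑ j : Fin n, Z j q ^ 2)) := by
        intro a
        rw [show (∑ b : Fin k, ∑ q : Fin k,
              c ^ 2 * ((∑ j : Fin n, Z j b ^ 2) * (∑ j : Fin n, Z j q ^ 2)))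
            = ∑ b : Fin k, ∑ q : Fin k,
              (∑ j : Fin n, Z j b ^ 2) * (c ^ 2 * (∑ j : Fin n, Z j q ^ 2)) from
          Finset.sum_congr rfl fun b _ => Finset.sum_congr rfl fun q _ => by ring]
        rw [hprod (fun b : Fin k => ∑ j : Fin n, Z j b ^ 2)
          (fun q : Fin k => c ^ 2 * (∑ j : Fin n, Z j q ^ 2))]
        rw [← Finset.mul_sum]
        ring
      rw [Finset.sum_congr rfl fun a (_ : a ∈ Finset.univ) => hfactor a]
      rw [Finset.sum_const, Finset.card_univ, Fintype.card_fin, nsmul_eq_mul]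
      have hswap : (∑ b : Fin k, ∑ j : Fin n, Z j b ^ 2)
          = ∑ i : Fin n, ∑ l : Fin k, Z i l ^ 2 := Finset.sum_comm
      rw [hswap, hS]
      exact le_of_eq (by ring)
    have hE3 : (∑ a : Fin n, ∑ b : Fin k, ∑ p : Fin n, ∑ q : Fin k,
          c ^ 2 * (Z p b ^ 2 * Z a q ^ 2)) ≤ (n:ℝ) * k * c ^ 2 * ‖X‖ ^ 4 := by
      have hfac2 : ∀ (a : Fin n) (b : Fin k),
          (∑ p : Fin n, ∑ q : Fin k, c ^ 2 * (Z p b ^ 2 * Z a q ^ 2))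
            = c ^ 2 * ((∑ p : Fin n, Z p b ^ 2) * (∑ q : Fin k, Z a q ^ 2)) := by
        intro a b
        rw [show (∑ p : Fin n, ∑ q : Fin k, c ^ 2 * (Z p b ^ 2 * Z a q ^ 2))
            = ∑ p : Fin n, ∑ q : Fin k, (Z p b ^ 2) * (c ^ 2 * Z a q ^ 2) from
          Finset.sum_congr rfl fun p _ => Finset.sum_congr rfl fun q _ => by ring]
        rw [hprod (fun p : Fin n => Z p b ^ 2) (fun q : Fin k => c ^ 2 * Z a q ^ 2)]
        rw [← Finset.mul_sum]
        ring
      rw [Finset.sum_congr rfl fun a (_ : a ∈ Finset.univ) =>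
        Finset.sum_congr rfl fun b (_ : b ∈ Finset.univ) => hfac2 a b]
      rw [show (∑ a : Fin n, ∑ b : Fin k,
            c ^ 2 * ((∑ p : Fin n, Z p b ^ 2) * (∑ q : Fin k, Z a q ^ 2)))
          = ∑ a : Fin n, ∑ b : Fin k,
            (c ^ 2 * (∑ q : Fin k, Z a q ^ 2)) * (∑ p : Fin n, Z p b ^ 2) from
        Finset.sum_congr rfl fun a _ => Finset.sum_congr rfl fun b _ => by ring]
      rw [hprod (fun a : Fin n => c ^ 2 * (∑ q : Fin k, Z a q ^ 2))
        (fun b : Fin k => ∑ p : Fin n, Z p b ^ 2)]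
      rw [← Finset.mul_sum]
      have hswap2 : (∑ b : Fin k, ∑ p : Fin n, Z p b ^ 2)
          = ∑ i : Fin n, ∑ l : Fin k, Z i l ^ 2 := Finset.sum_comm
      rw [hswap2, hS]
      have h1 : c ^ 2 * ‖X‖ ^ 2 * ‖X‖ ^ 2 = c ^ 2 * ‖X‖ ^ 4 := by ring
      calc c ^ 2 * ‖X‖ ^ 2 * ‖X‖ ^ 2 = 1 * (c ^ 2 * ‖X‖ ^ 4) := by ring
        _ ≤ ((n:ℝ) * k) * (c ^ 2 * ‖X‖ ^ 4) :=
            mul_le_mul_of_nonneg_right hnk1 (by positivity)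
        _ = (n:ℝ) * k * c ^ 2 * ‖X‖ ^ 4 := by ring
    rw [hE1]
    linarith [hE2, hE3]
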